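/- Let H be a real Hilbert space, F : H → H as in the previous statement (ζ-monotone perturbation, L-Lipschitz, ζ ≤ L + 1), and T > 0 with T²(1 + L) ≤ ζ/(1 + L). Define the exact preconditioned HMC transition x'(x, v) = position component of the flow of q'' = -q - F(q) at time T started at (x, v). Then for v ~ any probability distribution on H, E[‖x'(x, v) - x'(y, v)‖] ≤ (1 - ζT²/27) ‖x - y‖ for all x, y ∈ H. -/

import Mathlib

open MeasureTheory
open intervalIntegral

private lemma poly_int (s α β : ℝ) :
    ∫ u in (0:ℝ)..s, (s - u) * (α + β * u ^ 2) = α * s ^ 2 / 2 + β * s ^ 4 / 12 := by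
  have h : ∀ u ∈ Set.uIcc (0:ℝ) s,
      HasDerivAt (fun u : ℝ => s * α * u + s * (β / 3) * u ^ 3 - α / 2 * u ^ 2 - β / 4 * u ^ 4)
        ((s - u) * (α + β * u ^ 2)) u := by
    intro u _
    have H := ((((hasDerivAt_id u).const_mul (s * α)).add
        ((hasDerivAt_pow 3 u).const_mul (s * (β / 3)))).sub
        ((hasDerivAt_pow 2 u).const_mul (α / 2))).sub
        ((hasDerivAt_pow 4 u).const_mul (β / 4))
    refine H.congr_deriv ?_
    push_cast
    ring
  rw [integral_eq_sub_of_hasDerivAt h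
    (Continuous.intervalIntegrable (by fun_prop) 0 s)]
  ring

set_option maxHeartbeats 1000000 in
private lemma key_contract {H : Type*} [NormedAddCommGroup H] [InnerProductSpace ℝ H]
    (ζ K : ℝ) (hζ : 0 < ζ) (hK1 : (1:ℝ) ≤ K) (hζK : ζ ≤ K)
    (T : ℝ) (hT : 0 < T) (hK2T : K ^ 2 * T ^ 2 ≤ ζ)
    (f g φ : ℝ → H)
    (hg0 : g 0 = 0)
    (hf' : ∀ s, HasDerivAt f (g s) s)
    (hg' : ∀ s, HasDerivAt g (φ s) s)
    (hφc : Continuous φ)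
    (hφnorm : ∀ s, ‖φ s‖ ≤ K * ‖f s‖)
    (hmono : ∀ s, (inner ℝ (f s) (f s) : ℝ) + (inner ℝ (-(φ s) - f s) (f s) : ℝ) ≥ ζ * ‖f s‖ ^ 2) :
    ‖f T‖ ≤ (1 - ζ * T ^ 2 / 27) * ‖f 0‖ := by
  have hK0 : (0:ℝ) < K := lt_of_lt_of_le one_pos hK1
  have hKT : K * T ^ 2 ≤ 1 := by nlinarith
  have hζT : ζ * T ^ 2 ≤ 1 := by nlinarith
  have hc27 : 0 ≤ 1 - ζ * T ^ 2 / 27 := by nlinarith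
  set D := ‖f 0‖ with hD
  clear_value D
  have hD0 : 0 ≤ D := by rw [hD]; exact norm_nonneg _
  have hfc : Continuous f := continuous_iff_continuousAt.2 fun s => (hf' s).continuousAt
  -- scalar Taylor identity
  have taylor : ∀ (w : H) (s : ℝ), (inner ℝ w (f s - f 0) : ℝ)
      = ∫ u in (0:ℝ)..s, (s - u) * (inner ℝ w (φ u) : ℝ) := by
    intro w s
    have hσ : ∀ u ∈ Set.uIcc (0:ℝ) s,
        HasDerivAt (fun u => (inner ℝ w (f u) : ℝ) + (s - u) * (inner ℝ w (g u) : ℝ))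
          ((s - u) * (inner ℝ w (φ u) : ℝ)) u := by
      intro u _
      have h1 : HasDerivAt (fun u => (inner ℝ w (f u) : ℝ)) (inner ℝ w (g u) : ℝ) u := by
        simpa using HasDerivAt.inner ℝ (hasDerivAt_const u w) (hf' u)
      have h2' : HasDerivAt (fun u => (inner ℝ w (g u) : ℝ)) (inner ℝ w (φ u) : ℝ) u := by
        simpa using HasDerivAt.inner ℝ (hasDerivAt_const u w) (hg' u)
      have h2 : HasDerivAt (fun u => (s - u) * (inner ℝ w (g u) : ℝ))
          ((-1) * (inner ℝ w (g u) : ℝ) + (s - u) * (inner ℝ w (φ u) : ℝ)) u := by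
        have := ((hasDerivAt_id u).const_sub s).mul h2'
        refine this.congr_deriv ?_
        simp only [id]
      have := h1.add h2
      refine this.congr_deriv ?_
      try ring
    rw [integral_eq_sub_of_hasDerivAt hσ
      (Continuous.intervalIntegrable
        ((continuous_const.sub continuous_id).mul (Continuous.inner continuous_const hφc)) 0 s)]
    rw [hg0]
    simp [inner_sub_right]
  -- generic norm bound
  have genbound : ∀ s : ℝ, 0 ≤ s → ∀ α β : ℝ,
      (∀ u ∈ Set.Icc (0:ℝ) s, ‖φ u‖ ≤ α + β * u ^ 2) →
      ‖f s - f 0‖ ≤ α * s ^ 2 / 2 + β * s ^ 4 / 12 := by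
    intro s hs α β hB
    have hRHS0 : 0 ≤ α * s ^ 2 / 2 + β * s ^ 4 / 12 := by
      rw [← poly_int s α β]
      apply intervalIntegral.integral_nonneg hs
      intro u hu
      exact mul_nonneg (by linarith [hu.2]) ((norm_nonneg (φ u)).trans (hB u hu))
    rcases eq_or_lt_of_le (norm_nonneg (f s - f 0)) with h0 | h0
    · linarith [h0.symm]
    set w := f s - f 0 with hw
    have hid : ‖w‖ ^ 2 = (inner ℝ w (f s - f 0) : ℝ) := (real_inner_self_eq_norm_sq w).symm
    have hle : (inner ℝ w (f s - f 0) : ℝ) ≤ ‖w‖ * α * s ^ 2 / 2 + ‖w‖ * β * s ^ 4 / 12 := by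
      rw [taylor w s]
      have hmono' : (∫ u in (0:ℝ)..s, (s - u) * (inner ℝ w (φ u) : ℝ))
          ≤ ∫ u in (0:ℝ)..s, (s - u) * ((‖w‖ * α) + (‖w‖ * β) * u ^ 2) := by
        apply intervalIntegral.integral_mono_on hs
          (Continuous.intervalIntegrable
            ((continuous_const.sub continuous_id).mul (Continuous.inner continuous_const hφc)) 0 s)
          (Continuous.intervalIntegrable (by fun_prop) 0 s)
        intro u hu
        have h1 : (inner ℝ w (φ u) : ℝ) ≤ ‖w‖ * ‖φ u‖ := real_inner_le_norm w (φ u)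
        have h2 := hB u hu
        have h3 : (0:ℝ) ≤ ‖w‖ := norm_nonneg w
        have h4 : (0:ℝ) ≤ s - u := by linarith [hu.2]
        have h6 : (inner ℝ w (φ u) : ℝ) ≤ ‖w‖ * (α + β * u ^ 2) :=
          h1.trans (mul_le_mul_of_nonneg_left h2 h3)
        simp only [Pi.mul_apply, Pi.sub_apply, id_eq]
        nlinarith [mul_le_mul_of_nonneg_left h6 h4]
      rw [poly_int] at hmono'
      linarith
    nlinarith [hle, hid]
  -- max bound: ‖f s‖ ≤ 2 D on [0,T]
  have hM : ∀ s ∈ Set.Icc (0:ℝ) T, ‖f s‖ ≤ 2 * D := by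
    obtain ⟨s₀, hs₀mem, hs₀max⟩ := isCompact_Icc.exists_isMaxOn (Set.nonempty_Icc.2 hT.le)
      (hfc.norm.continuousOn (s := Set.Icc (0:ℝ) T))
    have hMle : ∀ u ∈ Set.Icc (0:ℝ) T, ‖f u‖ ≤ ‖f s₀‖ := fun u hu => hs₀max hu
    have hs₀T : s₀ ^ 2 ≤ T ^ 2 := by nlinarith [hs₀mem.1, hs₀mem.2]
    have h2 : ‖f s₀ - f 0‖ ≤ (K * ‖f s₀‖) * s₀ ^ 2 / 2 + 0 * s₀ ^ 4 / 12 := by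
      apply genbound s₀ hs₀mem.1
      intro u hu
      have h3 := hφnorm u
      have h4 : ‖f u‖ ≤ ‖f s₀‖ := hMle u ⟨hu.1, hu.2.trans hs₀mem.2⟩
      nlinarith
    have h5 : ‖f s₀‖ ≤ D + ‖f s₀ - f 0‖ := by
      have := norm_sub_norm_le (f s₀) (f 0)
      have h5' := norm_sub_le (f s₀) (f 0)
      simp only [hD]
      linarith
    have h6 : K * s₀ ^ 2 ≤ 1 := by nlinarith
    have h7 : ‖f s₀‖ ≤ 2 * D := by nlinarith [norm_nonneg (f s₀)]
    intro s hs
    exact (hMle s hs).trans h7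
  -- first Grönwall-type bound
  have hsq_le : ∀ s : ℝ, s ∈ Set.Icc (0:ℝ) T → s ^ 2 ≤ T ^ 2 := by
    intro s hs; nlinarith [hs.1, hs.2]
  have hKs1 : ∀ s : ℝ, s ∈ Set.Icc (0:ℝ) T → K * s ^ 2 ≤ 1 := by
    intro s hs; nlinarith [hsq_le s hs]
  have hε1 : ∀ s ∈ Set.Icc (0:ℝ) T, ‖f s - f 0‖ ≤ K * D * s ^ 2 := by
    intro s hs
    have h1 : ∀ u ∈ Set.Icc (0:ℝ) s, ‖φ u‖ ≤ (K * (2 * D)) + 0 * u ^ 2 := by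
      intro u hu
      have h3 := hφnorm u
      have h4 := hM u ⟨hu.1, hu.2.trans hs.2⟩
      have h5 := mul_le_mul_of_nonneg_left h4 hK0.le
      linarith
    have h2 := genbound s hs.1 (K * (2 * D)) 0 h1
    linarith [h2]
  have hup : ∀ s ∈ Set.Icc (0:ℝ) T, ‖f s‖ ≤ D + K * D * s ^ 2 := by
    intro s hs
    have h1 := hε1 s hs
    have h2 := norm_sub_norm_le (f s) (f 0)
    rw [← hD] at h2
    linarith
  -- bootstrap
  have hε2 : ∀ s ∈ Set.Icc (0:ℝ) T, ‖f s - f 0‖ ≤ 7/12 * K * D * s ^ 2 := by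
    intro s hs
    have h1 : ∀ u ∈ Set.Icc (0:ℝ) s, ‖φ u‖ ≤ K * D + (K * (K * D)) * u ^ 2 := by
      intro u hu
      have h3 := hφnorm u
      have h4 := hup u ⟨hu.1, hu.2.trans hs.2⟩
      have h5 := mul_le_mul_of_nonneg_left h4 hK0.le
      have h6 : K * (D + K * D * u ^ 2) = K * D + K * (K * D) * u ^ 2 := by ring
      linarith
    have h2 := genbound s hs.1 (K * D) (K * (K * D)) h1
    have h6 := hKs1 s hs
    have h7 : (K * s ^ 2) * (K * D * s ^ 2) ≤ 1 * (K * D * s ^ 2) :=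
      mul_le_mul_of_nonneg_right h6 (by positivity)
    linarith [h2, h7]
  have hlow : ∀ s ∈ Set.Icc (0:ℝ) T, D - 7/12 * K * D * s ^ 2 ≤ ‖f s‖ := by
    intro s hs
    have h1 := hε2 s hs
    have h2 := norm_sub_norm_le (f 0) (f s)
    rw [norm_sub_rev, ← hD] at h2
    linarith
  have hupc : ∀ s ∈ Set.Icc (0:ℝ) T, ‖f s‖ ≤ D + 7/12 * K * D * s ^ 2 := by
    intro s hs
    have h1 := hε2 s hs
    have h2 := norm_sub_norm_le (f s) (f 0)
    rw [← hD] at h2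
    linarith
  -- pointwise inner bound
  have hinner : ∀ u ∈ Set.Icc (0:ℝ) T, (inner ℝ (f 0) (φ u) : ℝ)
      ≤ -(ζ * D ^ 2) + ((7/6) * ζ * K + (133/144) * K ^ 2) * D ^ 2 * u ^ 2 := by
    intro u hu
    have hm := hmono u
    have e1 : (inner ℝ (f u) (φ u) : ℝ)
        = -((inner ℝ (f u) (f u) : ℝ) + (inner ℝ (-(φ u) - f u) (f u) : ℝ)) := by
      rw [inner_sub_left, inner_neg_left, real_inner_comm (φ u) (f u)]
      ring
    have e2 : (inner ℝ (f 0) (φ u) : ℝ)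
        = (inner ℝ (f u) (φ u) : ℝ) - (inner ℝ (f u - f 0) (φ u) : ℝ) := by
      rw [← inner_sub_left]
      congr 1
      abel
    have habs : |(inner ℝ (f u - f 0) (φ u) : ℝ)| ≤ ‖f u - f 0‖ * ‖φ u‖ :=
      abs_real_inner_le_norm _ _
    have habs' := abs_le.1 habs
    have hE := hε2 u hu
    have hφn := hφnorm u
    have hn0 : (0:ℝ) ≤ ‖f u‖ := norm_nonneg _
    have hnl := hlow u hu
    have hnu := hupc u hu
    have hKu := hKs1 u hu
    have hcross : ‖f u - f 0‖ * ‖φ u‖ ≤ (7/12 * K * D * u ^ 2) * (K * ‖f u‖) := by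
      apply mul_le_mul hE hφn (norm_nonneg _)
      positivity
    have hcross2 : (7/12 * K * D * u ^ 2) * (K * ‖f u‖)
        ≤ (7/12 * K * D * u ^ 2) * (K * (D + 7/12 * K * D * u ^ 2)) := by
      apply mul_le_mul_of_nonneg_left _ (by positivity)
      exact mul_le_mul_of_nonneg_left hnu hK0.le
    have hlow0 : 0 ≤ D - 7/12 * K * D * u ^ 2 := by nlinarith
    have hsqn : (D - 7/12 * K * D * u ^ 2) ^ 2 ≤ ‖f u‖ ^ 2 := by
      nlinarith [hnl, hlow0, hn0]
    have hquad : -(ζ * ‖f u‖ ^ 2) ≤ -(ζ * (D - 7/12 * K * D * u ^ 2) ^ 2) := by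
      nlinarith [hsqn, hζ]
    -- combine
    rw [e2, e1]
    have hmain : -((inner ℝ (f u) (f u) : ℝ) + (inner ℝ (-(φ u) - f u) (f u) : ℝ))
        ≤ -(ζ * ‖f u‖ ^ 2) := by linarith [hm]
    have halg : -(ζ * (D - 7/12 * K * D * u ^ 2) ^ 2)
        + (7/12 * K * D * u ^ 2) * (K * (D + 7/12 * K * D * u ^ 2))
        ≤ -(ζ * D ^ 2) + ((7/6) * ζ * K + (133/144) * K ^ 2) * D ^ 2 * u ^ 2 := by
      nlinarith [mul_nonneg (show (0:ℝ) ≤ K^2 * u^2 * D^2 by positivity) (sub_nonneg.2 hKu),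
        mul_nonneg hζ.le (show (0:ℝ) ≤ K^2 * u^4 * D^2 by positivity)]
    linarith [hmain, hquad, habs'.1, hcross, hcross2, halg]
  -- integral bound
  have hint1 : (inner ℝ (f 0) (f T - f 0) : ℝ)
      ≤ -(ζ * D ^ 2) * T ^ 2 / 2 + (((7/6) * ζ * K + (133/144) * K ^ 2) * D ^ 2) * T ^ 4 / 12 := by
    rw [taylor (f 0) T]
    have hmono' : (∫ u in (0:ℝ)..T, (T - u) * (inner ℝ (f 0) (φ u) : ℝ))
        ≤ ∫ u in (0:ℝ)..T, (T - u) * ((-(ζ * D ^ 2)) + (((7/6) * ζ * K + (133/144) * K ^ 2) * D ^ 2) * u ^ 2) := by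
      apply intervalIntegral.integral_mono_on hT.le
        (Continuous.intervalIntegrable
          ((continuous_const.sub continuous_id).mul (Continuous.inner continuous_const hφc)) 0 T)
        (Continuous.intervalIntegrable (by fun_prop) 0 T)
      intro u hu
      have h1 := hinner u hu
      have h4 : (0:ℝ) ≤ T - u := by linarith [hu.2]
      simp only [Pi.mul_apply, Pi.sub_apply, id_eq]
      nlinarith [mul_le_mul_of_nonneg_left h1 h4]
    rw [poly_int] at hmono'
    linarith
  have hR : ‖f T - f 0‖ ≤ K * D * T ^ 2 / 2 + K * (K * D) * T ^ 4 / 12 := by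
    apply genbound T hT.le
    intro u hu
    have h3 := hφnorm u
    have h4 := hup u hu
    have h5 := mul_le_mul_of_nonneg_left h4 hK0.le
    have h6 : K * (D + K * D * u ^ 2) = K * D + K * (K * D) * u ^ 2 := by ring
    linarith
  have hexp : ‖f T‖ ^ 2 = D ^ 2 + 2 * (inner ℝ (f 0) (f T - f 0) : ℝ) + ‖f T - f 0‖ ^ 2 := by
    have h := norm_add_sq_real (f 0) (f T - f 0)
    have h9 : f 0 + (f T - f 0) = f T := by abel
    rw [h9] at h
    rw [h, hD]
  have hζT2 : (0:ℝ) ≤ ζ * T ^ 2 := by positivity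
  have c2 : K ^ 2 * T ^ 4 ≤ ζ * T ^ 2 := by
    nlinarith [mul_le_mul_of_nonneg_right hK2T (sq_nonneg T)]
  have c3 : K ^ 3 * T ^ 6 ≤ ζ * T ^ 2 := by
    nlinarith [mul_le_mul c2 hKT (by positivity : (0:ℝ) ≤ K * T ^ 2) hζT2]
  have c4 : K ^ 4 * T ^ 8 ≤ ζ * T ^ 2 := by
    nlinarith [mul_le_mul c3 hKT (by positivity : (0:ℝ) ≤ K * T ^ 2) hζT2]
  have hb1 : ζ * K * T ^ 4 * D ^ 2 ≤ ζ * T ^ 2 * D ^ 2 := by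
    nlinarith [mul_le_mul_of_nonneg_right (mul_le_mul_of_nonneg_right hKT hζT2) (sq_nonneg D)]
  have hb2 : K ^ 2 * T ^ 4 * D ^ 2 ≤ ζ * T ^ 2 * D ^ 2 :=
    mul_le_mul_of_nonneg_right c2 (sq_nonneg D)
  have hb3 : K ^ 3 * T ^ 6 * D ^ 2 ≤ ζ * T ^ 2 * D ^ 2 :=
    mul_le_mul_of_nonneg_right c3 (sq_nonneg D)
  have hb4 : K ^ 4 * T ^ 8 * D ^ 2 ≤ ζ * T ^ 2 * D ^ 2 :=
    mul_le_mul_of_nonneg_right c4 (sq_nonneg D)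
  have hRsq : ‖f T - f 0‖ ^ 2 ≤ (K * D * T ^ 2 / 2 + K * (K * D) * T ^ 4 / 12) ^ 2 :=
    pow_le_pow_left₀ (norm_nonneg _) hR 2
  have hfinal : ‖f T‖ ^ 2 ≤ ((1 - ζ * T ^ 2 / 27) * D) ^ 2 := by
    rw [hexp]
    nlinarith [hint1, hRsq, hb1, hb2, hb3, hb4,
      mul_nonneg hζT2 (sq_nonneg D),
      mul_nonneg (mul_nonneg hζT2 hζT2) (sq_nonneg D)]
  have h := Real.sqrt_le_sqrt hfinal
  rwa [Real.sqrt_sq (norm_nonneg _), Real.sqrt_sq (mul_nonneg hc27 hD0)] at h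


theorem stmt_14 {H : Type*} [NormedAddCommGroup H] [InnerProductSpace ℝ H]
    [MeasurableSpace H]
    (F : H → H) (ζ L : ℝ) (hζ : 0 < ζ) (hL : 0 ≤ L) (hζL : ζ ≤ L + 1)
    (hmono : ∀ a b : H,
      (inner ℝ (a - b) (a - b) : ℝ) + (inner ℝ (F a - F b) (a - b) : ℝ) ≥ ζ * ‖a - b‖ ^ 2)
    (hF : ∀ a b : H, ‖F a - F b‖ ≤ L * ‖a - b‖)
    (T : ℝ) (hT : 0 < T) (hTL : T ^ 2 * (1 + L) ≤ ζ / (1 + L))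
    (q p : H → H → ℝ → H)
    (hflow : ∀ x v : H,
      q x v 0 = x ∧ p x v 0 = v ∧
      (∀ s : ℝ, HasDerivAt (q x v) (p x v s) s) ∧
      (∀ s : ℝ, HasDerivAt (p x v) (-(q x v s) - F (q x v s)) s))
    (μ : Measure H) [IsProbabilityMeasure μ] :
    ∀ x y : H,
      ∫ v, ‖q x v T - q y v T‖ ∂μ ≤ (1 - ζ * T ^ 2 / 27) * ‖x - y‖ := by
  intro x y
  have hK0 : (0:ℝ) < 1 + L := by linarith
  have hK2T : (1 + L) ^ 2 * T ^ 2 ≤ ζ := by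
    have h := mul_le_mul_of_nonneg_right hTL hK0.le
    rw [div_mul_cancel₀ _ (ne_of_gt hK0)] at h
    nlinarith [h]
  have hc27 : 0 ≤ 1 - ζ * T ^ 2 / 27 := by
    nlinarith [hK2T, mul_le_mul_of_nonneg_right
      (mul_le_mul hζL hζL hζ.le (by linarith : (0:ℝ) ≤ L + 1)) (sq_nonneg T)]
  have hFc : Continuous F := by
    have hlip : LipschitzWith (Real.toNNReal L) F := by
      apply LipschitzWith.of_dist_le_mul
      intro a b
      rw [dist_eq_norm, dist_eq_norm, Real.coe_toNNReal L hL]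
      exact hF a b
    exact hlip.continuous
  have key : ∀ v : H, ‖q x v T - q y v T‖ ≤ (1 - ζ * T ^ 2 / 27) * ‖x - y‖ := by
    intro v
    obtain ⟨hq0x, hp0x, hq'x, hp'x⟩ := hflow x v
    obtain ⟨hq0y, hp0y, hq'y, hp'y⟩ := hflow y v
    have h := key_contract ζ (1 + L) hζ (by linarith) (by linarith) T hT hK2T
      (fun s => q x v s - q y v s) (fun s => p x v s - p y v s)
      (fun s => -(q x v s - q y v s) - (F (q x v s) - F (q y v s)))
      (by show p x v 0 - p y v 0 = 0; rw [hp0x, hp0y, sub_self])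
      (fun s => (hq'x s).sub (hq'y s))
      (fun s => by
        have hd := (hp'x s).sub (hp'y s)
        show HasDerivAt (fun s => p x v s - p y v s)
          (-(q x v s - q y v s) - (F (q x v s) - F (q y v s))) s
        refine hd.congr_deriv ?_
        abel)
      (by
        have hqx : Continuous (q x v) := continuous_iff_continuousAt.2 fun s => (hq'x s).continuousAt
        have hqy : Continuous (q y v) := continuous_iff_continuousAt.2 fun s => (hq'y s).continuousAt
        exact ((hqx.sub hqy).neg).sub ((hFc.comp hqx).sub (hFc.comp hqy)))
      (fun s => by
        show ‖-(q x v s - q y v s) - (F (q x v s) - F (q y v s))‖ ≤ (1 + L) * ‖q x v s - q y v s‖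
        have h1 := hF (q x v s) (q y v s)
        have h2 := norm_sub_le (-(q x v s - q y v s)) (F (q x v s) - F (q y v s))
        rw [norm_neg] at h2
        linarith)
      (fun s => by
        have hm := hmono (q x v s) (q y v s)
        have heq : -((fun s => -(q x v s - q y v s) - (F (q x v s) - F (q y v s))) s)
            - ((fun s => q x v s - q y v s) s) = F (q x v s) - F (q y v s) := by
          show -(-(q x v s - q y v s) - (F (q x v s) - F (q y v s)))
            - (q x v s - q y v s) = F (q x v s) - F (q y v s)
          abel
        show (inner ℝ (q x v s - q y v s) (q x v s - q y v s) : ℝ)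
            + (inner ℝ (-((fun s => -(q x v s - q y v s) - (F (q x v s) - F (q y v s))) s)
                - ((fun s => q x v s - q y v s) s)) (q x v s - q y v s) : ℝ)
            ≥ ζ * ‖q x v s - q y v s‖ ^ 2
        rw [heq]
        exact hm)
    rw [hq0x, hq0y] at h
    exact h
  by_cases hint : Integrable (fun v => ‖q x v T - q y v T‖) μ
  · calc ∫ v, ‖q x v T - q y v T‖ ∂μ
        ≤ ∫ _v, (1 - ζ * T ^ 2 / 27) * ‖x - y‖ ∂μ :=
          integral_mono hint (integrable_const _) key
      _ = (1 - ζ * T ^ 2 / 27) * ‖x - y‖ := by simp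
  · rw [integral_undef hint]
    exact mul_nonneg hc27 (norm_nonneg _)
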